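/- arXiv:1904.02753 — 2 statements merged into one kernel-verified Lean document; each statement's English description precedes it below -/
import Mathlib

section
/- Let A(w) be an affine matrix of size (m+n)×(m+n) over an associative unital ℂ-algebra 𝒜, and fix r ∈ {1,…,m+n}. Write A(w) in block form [[W(w), X(w)],[Y(w), Z(w)]] with W(w) of size r×r. Then the principal quasi-minors of A(w) satisfy d_i(A(w)) = d_i(W(w)) for i = 1,…,r, and d_i(A(w)) = d_{i−r}(Z(w) − Y(w)W(w)^{−1}X(w)) for i = r+1,…,m+n. -/
noncomputable section
open scoped Classical

/-- A superalgebra structure on an associative unital `ℂ`-algebra `A`: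
a `ℤ/2`-grading `A = A₀ ⊕ A₁` compatible with the multiplication. -/
structure SuperAlg (A : Type*) [Ring A] [Algebra ℂ A] where
  /-- The homogeneous components. -/
  g : ZMod 2 → Submodule ℂ A
  one_mem : (1 : A) ∈ g 0
  mul_mem : ∀ {d e : ZMod 2} {a b : A}, a ∈ g d → b ∈ g e → a * b ∈ g (d + e)
  decomp : ∀ a : A, ∃ a0 ∈ g 0, ∃ a1 ∈ g 1, a = a0 + a1
  disjoint : ∀ a : A, a ∈ g 0 → a ∈ g 1 → a = 0

/-- `(−1)^d` for `d : ℤ/2`. -/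
def sgnZ (d : ZMod 2) : ℤ := if d = 0 then 1 else -1

/-- A parity sequence: each `s i ∈ {1,−1}`. -/
def IsParitySeq {N : ℕ} (s : Fin N → ℤ) : Prop := ∀ i, s i = 1 ∨ s i = -1

/-- The `ℤ/2`-degree `ī^s` attached to a parity sequence. -/
def pdeg {N : ℕ} (s : Fin N → ℤ) (i : Fin N) : ZMod 2 := if s i = 1 then 0 else 1

/-- The supercommutator `[x,y] = xy − (−1)^{x̄·ȳ} yx` of elements of (declared) degrees
`dx`, `dy`. -/
def scomm {B : Type*} [Ring B] (dx dy : ZMod 2) (x y : B) : B :=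
  x * y - sgnZ (dx * dy) • (y * x)

/-- A matrix is of parity `s` if its `(i,j)` entry is homogeneous of degree `ī^s + j̄^s`
(with respect to the grading `g`). -/
def IsMatParity {B : Type*} [Ring B] [Algebra ℂ B] (g : ZMod 2 → Submodule ℂ B) {N : ℕ}
    (s : Fin N → ℤ) (M : Matrix (Fin N) (Fin N) B) : Prop :=
  ∀ i j, M i j ∈ g (pdeg s i + pdeg s j)

/-- A Manin matrix of parity `s`: a matrix of parity `s` whose entries satisfy
`[a_{i,j},a_{p,q}] = (−1)^{ī^s j̄^s + ī^s p̄^s + j̄^s p̄^s} [a_{p,j},a_{i,q}]`. -/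
def IsManin {B : Type*} [Ring B] [Algebra ℂ B] (g : ZMod 2 → Submodule ℂ B) {N : ℕ}
    (s : Fin N → ℤ) (M : Matrix (Fin N) (Fin N) B) : Prop :=
  IsMatParity g s M ∧
    ∀ i j p q, scomm (pdeg s i + pdeg s j) (pdeg s p + pdeg s q) (M i j) (M p q) =
      sgnZ (pdeg s i * pdeg s j + pdeg s i * pdeg s p + pdeg s j * pdeg s p) •
        scomm (pdeg s p + pdeg s j) (pdeg s i + pdeg s q) (M p j) (M i q)

/-- The grading on `𝒜[[w]]` induced by a grading on `𝒜` (the variable `w` is even):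
a power series is homogeneous of degree `d` iff all its coefficients are. -/
def gPS {A : Type*} [Ring A] [Algebra ℂ A] (g : ZMod 2 → Submodule ℂ A) (d : ZMod 2) :
    Submodule ℂ (PowerSeries A) where
  carrier := {f | ∀ t : ℕ, PowerSeries.coeff (R := A) t f ∈ g d}
  add_mem' := by
    intro f h hf hh t
    rw [map_add]
    exact (g d).add_mem (hf t) (hh t)
  zero_mem' := by
    intro t
    rw [map_zero]
    exact (g d).zero_mem
  smul_mem' := by
    intro c f hf t
    have : PowerSeries.coeff (R := A) t (c • f) = c • PowerSeries.coeff (R := A) t f := rfl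
    rw [this]
    exact (g d).smul_mem c (hf t)

/-- An affine matrix over `𝒜`: a matrix with entries in `𝒜[[w]]` whose constant term is the
identity matrix. -/
def IsAffine {A : Type*} [Ring A] {N : ℕ} (M : Matrix (Fin N) (Fin N) (PowerSeries A)) :
    Prop :=
  ∀ i j, PowerSeries.coeff (R := A) 0 (M i j) = if i = j then 1 else 0

/-- The leading principal `(i+1) × (i+1)` submatrix. -/
def leadSub {R : Type*} [Ring R] {N : ℕ} (M : Matrix (Fin N) (Fin N) R) (i : Fin N) :
    Matrix (Fin ((i : ℕ) + 1)) (Fin ((i : ℕ) + 1)) R :=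
  M.submatrix (Fin.castLE i.isLt) (Fin.castLE i.isLt)

/-- The `(i+1)`-st principal quasi-minor `d_{i+1}(M)`: the two-sided inverse of the last
diagonal entry of the two-sided inverse of the leading principal `(i+1) × (i+1)` submatrix
(`Ring.inverse` is the genuine two-sided inverse whenever one exists, and junk `0` otherwise). -/
def dQM {R : Type*} [Ring R] {N : ℕ} (M : Matrix (Fin N) (Fin N) R) (i : Fin N) : R :=
  Ring.inverse ((Ring.inverse (leadSub M i)) (Fin.last (i : ℕ)) (Fin.last (i : ℕ)))

/-- `x^e` for `e ∈ {1,−1}`: `x` itself for `e = 1` and the two-sided inverse for `e = −1`. -/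
def pexp {R : Type*} [Ring R] (x : R) (e : ℤ) : R := if e = 1 then x else Ring.inverse x

/-- Ordered product `f 0 * f 1 * ⋯ * f (N-1)` in a possibly noncommutative ring. -/
def listProd {R : Type*} [Ring R] {N : ℕ} (f : Fin N → R) : R :=
  ((List.finRange N).map f).prod

/-- The Berezinian of parity `s`: `Ber^s M = d_1(M)^{s_1} ⋯ d_N(M)^{s_N}`. -/
def berPar {R : Type*} [Ring R] {N : ℕ} (s : Fin N → ℤ) (M : Matrix (Fin N) (Fin N) R) : R :=
  listProd fun i => pexp (dQM M i) (s i)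

namespace St12Aux

lemma ring_inverse_eq {R : Type*} [Ring R] {a b : R} (h1 : a * b = 1) (h2 : b * a = 1) :
    Ring.inverse a = b := by
  have hu : IsUnit a := ⟨⟨a, b, h1, h2⟩, rfl⟩
  calc Ring.inverse a = Ring.inverse a * (a * b) := by rw [h1, mul_one]
  _ = (Ring.inverse a * a) * b := by rw [mul_assoc]
  _ = b := by rw [Ring.inverse_mul_cancel _ hu, one_mul]

def invCoeff {R : Type*} [Ring R] (f : ℕ → R) : ℕ → R
  | 0 => 1
  | (n+1) => -∑ k ∈ (Finset.range (n+1)).attach, f (n+1-(k:ℕ)) * invCoeff f k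
  decreasing_by exact Finset.mem_range.mp k.2

lemma invCoeff_zero {R : Type*} [Ring R] (f : ℕ → R) : invCoeff f 0 = 1 := by
  rw [invCoeff]

lemma invCoeff_succ {R : Type*} [Ring R] (f : ℕ → R) (n : ℕ) :
    invCoeff f (n+1) = -∑ k ∈ Finset.range (n+1), f (n+1-k) * invCoeff f k := by
  rw [invCoeff, Finset.sum_attach (Finset.range (n+1)) (fun k => f (n+1-k) * invCoeff f k)]

lemma sum_antidiagonal_invCoeff {R : Type*} [Ring R] (f : ℕ → R) (hf : f 0 = 1) (n : ℕ) :
    ∑ p ∈ Finset.HasAntidiagonal.antidiagonal n, f p.1 * invCoeff f p.2 = if n = 0 then 1 else 0 := by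
  cases n with
  | zero => simp [invCoeff_zero, hf]
  | succ n =>
    rw [Finset.Nat.sum_antidiagonal_eq_sum_range_succ_mk, Finset.sum_range_succ']
    have h1 : ∑ k ∈ Finset.range (n+1), f (k+1) * invCoeff f (n+1-(k+1))
        = ∑ k ∈ Finset.range (n+1), f (n+1-k) * invCoeff f k := by
      rw [← Finset.sum_range_reflect (fun k => f (n+1-k) * invCoeff f k) (n+1)]
      refine Finset.sum_congr rfl fun j hj => ?_
      rw [Finset.mem_range] at hj
      have e1 : n + 1 - (n + 1 - 1 - j) = j + 1 := by omega
      have e2 : n + 1 - 1 - j = n + 1 - (j + 1) := by omega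
      rw [e1, e2]
    rw [h1, hf, one_mul]
    have : n + 1 - 0 = n + 1 := by omega
    rw [this, invCoeff_succ]
    simp


lemma exists_affine_right_inv {A : Type*} [Ring A] {N : ℕ}
    {B : Matrix (Fin N) (Fin N) (PowerSeries A)} (hB : IsAffine B) :
    ∃ C, IsAffine C ∧ B * C = 1 := by
  set f : ℕ → Matrix (Fin N) (Fin N) A :=
    fun p => Matrix.of fun i j => PowerSeries.coeff (R := A) p (B i j) with hfdef
  have hf0 : f 0 = 1 := by
    ext i j
    simp only [hfdef, Matrix.of_apply, hB i j, Matrix.one_apply]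
  set c := invCoeff f with hcdef
  refine ⟨Matrix.of fun i j => PowerSeries.mk fun q => c q i j, ?_, ?_⟩
  · intro i j
    simp only [Matrix.of_apply, PowerSeries.coeff_mk, hcdef, invCoeff_zero]
    rfl
  · ext i j n
    rw [Matrix.mul_apply, map_sum]
    simp_rw [PowerSeries.coeff_mul]
    rw [Finset.sum_comm]
    have hstep : ∀ p ∈ Finset.HasAntidiagonal.antidiagonal n,
        (∑ k, PowerSeries.coeff (R := A) p.1 (B i k) *
          PowerSeries.coeff (R := A) p.2 ((Matrix.of fun i j => PowerSeries.mk fun q => c q i j) k j))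
        = (f p.1 * c p.2) i j := by
      intro p _
      rw [Matrix.mul_apply]
      refine Finset.sum_congr rfl fun k _ => ?_
      simp [hfdef, PowerSeries.coeff_mk]
    rw [Finset.sum_congr rfl hstep, ← Matrix.sum_apply, sum_antidiagonal_invCoeff f hf0 n]
    rw [Matrix.one_apply]
    by_cases hn : n = 0 <;> by_cases hij : i = j <;>
      simp [hn, hij, Matrix.one_apply, PowerSeries.coeff_one]

lemma affine_isUnit {A : Type*} [Ring A] {N : ℕ}
    {B : Matrix (Fin N) (Fin N) (PowerSeries A)} (hB : IsAffine B) : IsUnit B := by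
  obtain ⟨C, hC, h1⟩ := exists_affine_right_inv hB
  obtain ⟨D, _, h2⟩ := exists_affine_right_inv hC
  have hD : D = B := by
    calc D = 1 * D := (one_mul D).symm
    _ = (B * C) * D := by rw [h1]
    _ = B * (C * D) := by rw [mul_assoc]
    _ = B := by rw [h2, mul_one]
  exact ⟨⟨B, C, h1, by rw [← hD]; exact h2⟩, rfl⟩


lemma block_mul_inv {α : Type*} [Ring α] {m n : Type*} [Fintype m] [Fintype n]
    [DecidableEq m] [DecidableEq n]
    (W : Matrix m m α) (X : Matrix m n α) (Y : Matrix n m α) (Z : Matrix n n α)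
    (E : Matrix m m α) (F : Matrix n n α)
    (hWE : W * E = 1) (hEW : E * W = 1)
    (hSF : (Z - Y * E * X) * F = 1) (hFS : F * (Z - Y * E * X) = 1) :
    Matrix.fromBlocks W X Y Z *
      Matrix.fromBlocks (E + E*X*F*Y*E) (-(E*X*F)) (-(F*Y*E)) F = 1 ∧
    Matrix.fromBlocks (E + E*X*F*Y*E) (-(E*X*F)) (-(F*Y*E)) F *
      Matrix.fromBlocks W X Y Z = 1 := by
  have cW : ∀ x : Matrix m m α, W * (E * x) = x := fun x => by
    rw [← Matrix.mul_assoc, hWE, Matrix.one_mul]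
  have cW2 : ∀ x : Matrix m n α, W * (E * x) = x := fun x => by
    rw [← Matrix.mul_assoc, hWE, Matrix.one_mul]
  have hZF : Z * F = 1 + Y * (E * (X * F)) := by
    have h := hSF
    rw [Matrix.sub_mul] at h
    simp only [Matrix.mul_assoc] at h
    exact eq_add_of_sub_eq h
  have hFZ : F * Z = 1 + F * (Y * (E * X)) := by
    have h := hFS
    rw [Matrix.mul_sub] at h
    simp only [Matrix.mul_assoc] at h
    exact eq_add_of_sub_eq h
  have hTL : W * (E + E*X*F*Y*E) + X * (-(F*Y*E)) = 1 := by
    simp only [Matrix.mul_add, Matrix.add_mul, Matrix.mul_neg, Matrix.neg_mul, Matrix.mul_assoc]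
    rw [hWE, cW]
    abel
  have hTR : W * (-(E*X*F)) + X * F = 0 := by
    simp only [Matrix.mul_neg, Matrix.mul_assoc]
    rw [cW2]
    abel
  have hBL : Y * (E + E*X*F*Y*E) + Z * (-(F*Y*E)) = 0 := by
    simp only [Matrix.mul_add, Matrix.mul_neg, Matrix.mul_assoc]
    have h1 : Z * (F * (Y * E)) = Y * E + Y * (E * (X * (F * (Y * E)))) := by
      rw [← Matrix.mul_assoc, hZF, Matrix.add_mul, Matrix.one_mul]
      simp only [Matrix.mul_assoc]
    rw [h1]
    abel
  have hBR : Y * (-(E*X*F)) + Z * F = 1 := by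
    simp only [Matrix.mul_neg, Matrix.mul_assoc]
    rw [hZF]
    abel
  have hTL' : (E + E*X*F*Y*E) * W + (-(E*X*F)) * Y = 1 := by
    simp only [Matrix.add_mul, Matrix.neg_mul, Matrix.mul_assoc]
    rw [hEW]
    simp only [Matrix.mul_one]
    abel
  have hTR' : (E + E*X*F*Y*E) * X + (-(E*X*F)) * Z = 0 := by
    simp only [Matrix.add_mul, Matrix.neg_mul, Matrix.mul_assoc]
    rw [hFZ]
    simp only [Matrix.mul_add, Matrix.mul_one, Matrix.mul_assoc]
    abel
  have hBL' : (-(F*Y*E)) * W + F * Y = 0 := by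
    simp only [Matrix.neg_mul, Matrix.mul_assoc]
    rw [hEW]
    simp only [Matrix.mul_one]
    abel
  have hBR' : (-(F*Y*E)) * X + F * Z = 1 := by
    simp only [Matrix.neg_mul, Matrix.mul_assoc]
    rw [hFZ]
    abel
  constructor
  · rw [Matrix.fromBlocks_multiply, hTL, hTR, hBL, hBR, Matrix.fromBlocks_one]
  · rw [Matrix.fromBlocks_multiply, hTL', hTR', hBL', hBR', Matrix.fromBlocks_one]

end St12Aux

open St12Aux in
/-- **Statement 12.**  For an affine matrix `A(w) = [[W,X],[Y,Z]]` (block form, `W` of size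
`r × r`) over an associative unital `ℂ`-algebra, the principal quasi-minors satisfy
`d_i(A(w)) = d_i(W(w))` for `i = 1,…,r` and
`d_i(A(w)) = d_{i−r}(Z(w) − Y(w)W(w)⁻¹X(w))` for `i = r+1,…,m+n`. -/
theorem statement12 (A : Type*) [Ring A] [Algebra ℂ A] (r t : ℕ) (hr : 1 ≤ r)
    (M : Matrix (Fin (r + t)) (Fin (r + t)) (PowerSeries A))
    (haff : IsAffine M) :
    (∀ i : Fin (r + t), ∀ h : (i : ℕ) < r,
      dQM M i = dQM (M.submatrix (Fin.castAdd t) (Fin.castAdd t)) ⟨(i : ℕ), h⟩) ∧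
    (∀ i : Fin (r + t), ∀ h : r ≤ (i : ℕ),
      dQM M i =
        dQM (M.submatrix (Fin.natAdd r) (Fin.natAdd r) -
            M.submatrix (Fin.natAdd r) (Fin.castAdd t) *
              Ring.inverse (M.submatrix (Fin.castAdd t) (Fin.castAdd t)) *
              M.submatrix (Fin.castAdd t) (Fin.natAdd r))
          ⟨(i : ℕ) - r, by have := i.isLt; omega⟩) := by
  constructor
  · intro i hi
    have hls : leadSub M i
        = leadSub (M.submatrix (Fin.castAdd t) (Fin.castAdd t)) ⟨(i : ℕ), hi⟩ := by
      ext a b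
      simp only [leadSub, Matrix.submatrix_apply]
      congr 1 <;> exact Fin.ext rfl
    rw [dQM, dQM, hls]
  · intro i hir
    set k : ℕ := (i : ℕ) - r with hkdef
    have hkt : k < t := by have := i.isLt; omega
    have hik : (i : ℕ) = r + k := by omega
    set W := M.submatrix (Fin.castAdd t) (Fin.castAdd t) with hWdef
    set X := M.submatrix (Fin.castAdd t) (Fin.natAdd r) with hXdef
    set Y := M.submatrix (Fin.natAdd r) (Fin.castAdd t) with hYdef
    set Z := M.submatrix (Fin.natAdd r) (Fin.natAdd r) with hZdef
    set S := Z - Y * Ring.inverse W * X with hSdef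
    -- W is affine, hence a unit
    have hWaff : IsAffine W := by
      intro a b
      rw [hWdef, Matrix.submatrix_apply, haff]
      simp [Fin.ext_iff]
    have hWu : IsUnit W := affine_isUnit hWaff
    -- S is affine
    have hSaff : IsAffine S := by
      intro a b
      have h1 : PowerSeries.coeff (R := A) 0 ((Y * Ring.inverse W * X) a b) = 0 := by
        rw [Matrix.mul_apply, map_sum]
        refine Finset.sum_eq_zero fun q _ => ?_
        rw [PowerSeries.coeff_zero_eq_constantCoeff, map_mul]
        have h2 : PowerSeries.constantCoeff (R := A) ((Y * Ring.inverse W) a q) = 0 := by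
          rw [Matrix.mul_apply, map_sum]
          refine Finset.sum_eq_zero fun p _ => ?_
          rw [map_mul]
          have h3 : PowerSeries.constantCoeff (R := A) (Y a p) = 0 := by
            rw [← PowerSeries.coeff_zero_eq_constantCoeff, hYdef,
              Matrix.submatrix_apply, haff]
            have : ¬ (Fin.natAdd r a = Fin.castAdd t p) := by
              simp only [Fin.ext_iff, Fin.coe_natAdd, Fin.coe_castAdd]
              have := p.isLt; omega
            simp [this]
          rw [h3, zero_mul]
        rw [h2, zero_mul]
      rw [hSdef, Matrix.sub_apply, map_sub, h1, sub_zero, hZdef,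
        Matrix.submatrix_apply, haff]
      simp [Fin.ext_iff]
    -- the set-up for the block decomposition of the leading submatrix
    set u : ℕ := k + 1 with hudef
    have hN : (i : ℕ) + 1 = r + u := by omega
    have hut : u ≤ t := by omega
    set e : Fin r ⊕ Fin u ≃ Fin ((i : ℕ) + 1) :=
      finSumFinEquiv.trans (finCongr hN.symm) with hedef
    set Xf : Matrix (Fin r) (Fin u) (PowerSeries A) := X.submatrix id (Fin.castLE hut)
      with hXfdef
    set Yf : Matrix (Fin u) (Fin r) (PowerSeries A) := Y.submatrix (Fin.castLE hut) id
      with hYfdef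
    set Zf : Matrix (Fin u) (Fin u) (PowerSeries A) :=
      Z.submatrix (Fin.castLE hut) (Fin.castLE hut) with hZfdef
    have hB' : (leadSub M i).submatrix e e = Matrix.fromBlocks W Xf Yf Zf := by
      ext p q
      rcases p with a | a <;> rcases q with b | b <;>
        · simp only [Matrix.submatrix_apply, leadSub, hedef, Equiv.trans_apply,
            finSumFinEquiv_apply_left, finSumFinEquiv_apply_right, finCongr_apply,
            Matrix.fromBlocks_apply₁₁, Matrix.fromBlocks_apply₁₂,
            Matrix.fromBlocks_apply₂₁, Matrix.fromBlocks_apply₂₂,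
            hWdef, hXfdef, hYfdef, hZfdef, hXdef, hYdef, hZdef, id]
          congr 1 <;>
            · apply Fin.ext
              simp [Fin.coe_castAdd, Fin.coe_natAdd, Fin.coe_castLE, Fin.coe_cast]
    -- the Schur complement of the block decomposition is the leading submatrix of S
    have hSf : Zf - Yf * Ring.inverse W * Xf = leadSub S ⟨k, hkt⟩ := by
      ext a b
      have hmul : (Yf * Ring.inverse W * Xf) a b
          = (Y * Ring.inverse W * X) (Fin.castLE hkt a) (Fin.castLE hkt b) := by
        simp only [Matrix.mul_apply, hYfdef, hXfdef, Matrix.submatrix_apply, id,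
          Finset.sum_mul]
      simp only [Matrix.sub_apply, hZfdef, Matrix.submatrix_apply, leadSub, hSdef]
      rw [hmul]
    have hSu : IsUnit (leadSub S ⟨k, hkt⟩) := by
      apply affine_isUnit
      intro a b
      simp only [leadSub, Matrix.submatrix_apply]
      rw [hSaff]
      simp [Fin.ext_iff]
    -- inverses
    have hWc : W * Ring.inverse W = 1 := Ring.mul_inverse_cancel _ hWu
    have hWc' : Ring.inverse W * W = 1 := Ring.inverse_mul_cancel _ hWu
    have hSF : (Zf - Yf * Ring.inverse W * Xf) * Ring.inverse (leadSub S ⟨k, hkt⟩) = 1 := by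
      rw [hSf]; exact Ring.mul_inverse_cancel _ hSu
    have hFS : Ring.inverse (leadSub S ⟨k, hkt⟩) * (Zf - Yf * Ring.inverse W * Xf) = 1 := by
      rw [hSf]; exact Ring.inverse_mul_cancel _ hSu
    obtain ⟨hm1, hm2⟩ := block_mul_inv W Xf Yf Zf (Ring.inverse W)
      (Ring.inverse (leadSub S ⟨k, hkt⟩)) hWc hWc' hSF hFS
    set E := Ring.inverse W with hEdef
    set F := Ring.inverse (leadSub S ⟨k, hkt⟩) with hFdef
    set K : Matrix (Fin r ⊕ Fin u) (Fin r ⊕ Fin u) (PowerSeries A) :=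
      Matrix.fromBlocks (E + E*Xf*F*Yf*E) (-(E*Xf*F)) (-(F*Yf*E)) F with hKdef
    have hBB : leadSub M i = ((leadSub M i).submatrix e e).submatrix e.symm e.symm := by
      rw [Matrix.submatrix_submatrix, Equiv.self_comp_symm, Matrix.submatrix_id_id]
    have h1 : leadSub M i * (K.submatrix e.symm e.symm) = 1 := by
      conv_lhs => rw [hBB, hB']
      rw [Matrix.submatrix_mul_equiv, hm1, Matrix.submatrix_one_equiv]
    have h2 : (K.submatrix e.symm e.symm) * leadSub M i = 1 := by
      conv_lhs => rw [hBB, hB']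
      rw [Matrix.submatrix_mul_equiv, hm2, Matrix.submatrix_one_equiv]
    have hinv : Ring.inverse (leadSub M i) = K.submatrix e.symm e.symm :=
      ring_inverse_eq h1 h2
    have hlast : e.symm (Fin.last (i : ℕ)) = Sum.inr (Fin.last k) := by
      rw [Equiv.symm_apply_eq]
      apply Fin.ext
      simp [hedef, Fin.last]
      omega
    rw [dQM, dQM, hinv, Matrix.submatrix_apply, hlast, hKdef,
      Matrix.fromBlocks_apply₂₂]
end
end

section
/- Let A(w) be a 2×2 affine Manin matrix of parity (s_1,s_2) over a superalgebra 𝒜, and let σ be the transposition interchanging the two indices, so σ(A(w)) = (a_{σ(i),σ(j)}(w))_{i,j}. Then d_1(A(w))^{s_1} · d_2(A(w))^{s_2} = d_1(σ(A(w)))^{s_2} · d_2(σ(A(w)))^{s_1}. -/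
noncomputable section
open scoped Classical

-- HELPERS (to be inserted above theorem)
lemma rinv_eq {R : Type*} [Ring R] {x y : R} (h1 : x*y = 1) (h2 : y*x = 1) :
    Ring.inverse x = y :=
  Ring.inverse_unit ⟨x, y, h1, h2⟩

lemma half0 {B : Type*} [AddCommGroup B] [Module ℂ B] {x : B} (h : x + x = 0) : x = 0 := by
  have h2 : (2:ℂ) • x = 0 := by rw [two_smul]; exact h
  have := congrArg (fun y => (2⁻¹:ℂ) • y) h2
  simpa [smul_smul] using this

lemma comm_inv {R : Type*} [Ring R] {a ai c : R} (ha1 : a*ai = 1) (ha2 : ai*a = 1)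
    (h : a*c = c*a) : c*ai = ai*c := by
  calc c*ai = ai*(a*(c*ai)) := by rw [← mul_assoc, ha2, one_mul]
  _ = ai*(c*(a*ai)) := by rw [← mul_assoc a c, h, mul_assoc]
  _ = ai*c := by rw [ha1, mul_one]

lemma ringInverse_2x2 {R : Type*} [Ring R] (a b c d ai zi : R)
    (ha1 : a * ai = 1) (ha2 : ai * a = 1)
    (hz1 : (d - c * ai * b) * zi = 1) (hz2 : zi * (d - c * ai * b) = 1) :
    Ring.inverse !![a,b;c,d] = !![ai + ai*b*zi*c*ai, -(ai*b*zi); -(zi*c*ai), zi] := by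
  have Ha1 : ∀ x : R, a*(ai*x) = x := fun x => by rw [← mul_assoc, ha1, one_mul]
  have hcz : c*(ai*(b*zi)) = d*zi - 1 := by
    have h : d*zi - c*(ai*(b*zi)) = 1 := by rw [← hz1]; simp [sub_mul, mul_assoc]
    rw [← h]; abel
  have hzc : zi*(c*(ai*b)) = zi*d - 1 := by
    have h : zi*d - zi*(c*(ai*b)) = 1 := by rw [← hz2]; simp [mul_sub, mul_assoc]
    rw [← h]; abel
  have hz1' : ∀ x : R, c*(ai*(b*(zi*x))) = d*(zi*x) - x := by
    intro x
    calc c*(ai*(b*(zi*x))) = c*(ai*(b*zi))*x := by simp [mul_assoc]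
    _ = (d*zi - 1)*x := by rw [hcz]
    _ = d*(zi*x) - x := by rw [sub_mul, one_mul, mul_assoc]
  have e1 : a * (ai + ai*b*zi*c*ai) + b * -(zi*c*ai) = 1 := by
    simp only [mul_add, mul_neg, mul_assoc, Ha1, ha1]; abel
  have e2 : a * -(ai*b*zi) + b * zi = 0 := by
    simp only [mul_neg, mul_assoc, Ha1]; abel
  have e3 : c * (ai + ai*b*zi*c*ai) + d * -(zi*c*ai) = 0 := by
    simp only [mul_add, mul_neg, mul_assoc, hz1']; abel
  have e4 : c * -(ai*b*zi) + d * zi = 1 := by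
    simp only [mul_neg, mul_assoc, hcz]; abel
  have f1 : (ai + ai*b*zi*c*ai) * a + -(ai*b*zi) * c = 1 := by
    simp only [add_mul, neg_mul, mul_assoc, ha2, mul_one]; abel
  have f2 : (ai + ai*b*zi*c*ai) * b + -(ai*b*zi) * d = 0 := by
    simp only [add_mul, neg_mul, mul_assoc, hzc, mul_sub, mul_one]; abel
  have f3 : -(zi*c*ai) * a + zi * c = 0 := by
    simp only [neg_mul, mul_assoc, ha2, mul_one]; abel
  have f4 : -(zi*c*ai) * b + zi * d = 1 := by
    simp only [neg_mul, mul_assoc, hzc]; abel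
  apply rinv_eq
  · rw [Matrix.mul_fin_two, Matrix.one_fin_two, e1, e2, e3, e4]
  · rw [Matrix.mul_fin_two, Matrix.one_fin_two, f1, f2, f3, f4]

lemma dQM_zero' {R : Type*} [Ring R] (M : Matrix (Fin 2) (Fin 2) R) (ai : R)
    (ha1 : M 0 0 * ai = 1) (ha2 : ai * M 0 0 = 1) :
    dQM M 0 = M 0 0 := by
  have h1 : Ring.inverse (leadSub M (0 : Fin 2)) = Matrix.of (fun _ _ => ai) := by
    apply rinv_eq
    · ext i j
      fin_cases i; fin_cases j
      simp [Matrix.mul_apply, leadSub, Matrix.submatrix_apply]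
      convert ha1 using 2
    · ext i j
      fin_cases i; fin_cases j
      simp [Matrix.mul_apply, leadSub, Matrix.submatrix_apply]
      convert ha2 using 2
  rw [dQM, h1]
  exact rinv_eq ha2 ha1

lemma dQM_one' {R : Type*} [Ring R] (M : Matrix (Fin 2) (Fin 2) R) (ai zi : R)
    (ha1 : M 0 0 * ai = 1) (ha2 : ai * M 0 0 = 1)
    (hz1 : (M 1 1 - M 1 0 * ai * M 0 1) * zi = 1)
    (hz2 : zi * (M 1 1 - M 1 0 * ai * M 0 1) = 1) :
    dQM M 1 = M 1 1 - M 1 0 * ai * M 0 1 := by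
  have hls : leadSub M (1 : Fin 2) = M := by
    ext i j
    simp only [leadSub, Matrix.submatrix_apply]
    congr 1 <;> exact Fin.ext rfl
  have hlast : (Fin.last ((1 : Fin 2) : ℕ)) = (1 : Fin 2) := rfl
  rw [dQM, hls, hlast, Matrix.eta_fin_two M,
    ringInverse_2x2 (M 0 0) (M 0 1) (M 1 0) (M 1 1) ai zi ha1 ha2 hz1 hz2]
  simp only [Matrix.cons_val', Matrix.cons_val_one, Matrix.head_cons, Matrix.head_fin_const,
    Matrix.empty_val', Matrix.cons_val_fin_one, Matrix.of_apply]
  exact rinv_eq hz2 hz1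

/-- **Statement 14.**  For a `2×2` affine Manin matrix `A(w)` of parity `(s_1,s_2)` and the
transposition `σ` of the two indices,
`d_1(A)^{s_1} · d_2(A)^{s_2} = d_1(σ(A))^{s_2} · d_2(σ(A))^{s_1}`. -/
theorem statement14 (A : Type*) [Ring A] [Algebra ℂ A] (S : SuperAlg A)
    (s : Fin 2 → ℤ) (hs : IsParitySeq s)
    (M : Matrix (Fin 2) (Fin 2) (PowerSeries A))
    (haff : IsAffine M) (hM : IsManin (gPS S.g) s M) :
    pexp (dQM M 0) (s 0) * pexp (dQM M 1) (s 1) =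
      pexp (dQM (M.submatrix ⇑(Equiv.swap (0 : Fin 2) 1) ⇑(Equiv.swap (0 : Fin 2) 1)) 0)
          (s 1) *
        pexp (dQM (M.submatrix ⇑(Equiv.swap (0 : Fin 2) 1) ⇑(Equiv.swap (0 : Fin 2) 1)) 1)
          (s 0) := by
  obtain ⟨hpar, hrel⟩ := hM
  have cc : ∀ i j, PowerSeries.constantCoeff (R := A) (M i j) = if i = j then 1 else 0 := by
    intro i j
    rw [← PowerSeries.coeff_zero_eq_constantCoeff_apply]
    exact haff i j
  set a := M 0 0 with ha'
  set b := M 0 1 with hb'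
  set c := M 1 0 with hc'
  set d := M 1 1 with hd'
  have hUa : IsUnit a := by
    rw [PowerSeries.isUnit_iff_constantCoeff, ha', cc 0 0, if_pos rfl]; exact isUnit_one
  have hUd : IsUnit d := by
    rw [PowerSeries.isUnit_iff_constantCoeff, hd', cc 1 1, if_pos rfl]; exact isUnit_one
  obtain ⟨ua, hua⟩ := hUa
  obtain ⟨ud, hud⟩ := hUd
  set ai := ((ua⁻¹ : (PowerSeries A)ˣ) : PowerSeries A) with hai'
  set di := ((ud⁻¹ : (PowerSeries A)ˣ) : PowerSeries A) with hdi'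
  have ha1 : a * ai = 1 := by rw [← hua]; exact ua.mul_inv
  have ha2 : ai * a = 1 := by rw [← hua]; exact ua.inv_mul
  have hd1 : d * di = 1 := by rw [← hud]; exact ud.mul_inv
  have hd2 : di * d = 1 := by rw [← hud]; exact ud.inv_mul
  have hUZ : IsUnit (d - c * ai * b) := by
    rw [PowerSeries.isUnit_iff_constantCoeff, map_sub, map_mul, map_mul, hd', hc',
      cc 1 1, cc 1 0]
    simp
  have hUW : IsUnit (a - b * di * c) := by
    rw [PowerSeries.isUnit_iff_constantCoeff, map_sub, map_mul, map_mul, ha', hb',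
      cc 0 0, cc 0 1]
    simp
  obtain ⟨uz, huz⟩ := hUZ
  obtain ⟨uw, huw⟩ := hUW
  set zi := ((uz⁻¹ : (PowerSeries A)ˣ) : PowerSeries A) with hzi'
  set wi := ((uw⁻¹ : (PowerSeries A)ˣ) : PowerSeries A) with hwi'
  have hz1 : (d - c * ai * b) * zi = 1 := by rw [← huz]; exact uz.mul_inv
  have hz2 : zi * (d - c * ai * b) = 1 := by rw [← huz]; exact uz.inv_mul
  have hw1 : (a - b * di * c) * wi = 1 := by rw [← huw]; exact uw.mul_inv
  have hw2 : wi * (a - b * di * c) = 1 := by rw [← huw]; exact uw.inv_mul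
  set P := M.submatrix ⇑(Equiv.swap (0 : Fin 2) 1) ⇑(Equiv.swap (0 : Fin 2) 1) with hP
  have hP00 : P 0 0 = d := by simp [hP, Matrix.submatrix_apply, hd']
  have hP01 : P 0 1 = c := by simp [hP, Matrix.submatrix_apply, hc']
  have hP10 : P 1 0 = b := by simp [hP, Matrix.submatrix_apply, hb']
  have hP11 : P 1 1 = a := by simp [hP, Matrix.submatrix_apply, ha']
  have d1M : dQM M 0 = a := dQM_zero' M ai ha1 ha2
  have d2M : dQM M 1 = d - c * ai * b := dQM_one' M ai zi ha1 ha2 hz1 hz2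
  have hPW : P 1 1 - P 1 0 * di * P 0 1 = a - b * di * c := by rw [hP11, hP10, hP01]
  have d1P : dQM P 0 = d := by
    rw [dQM_zero' P di (by rw [hP00]; exact hd1) (by rw [hP00]; exact hd2), hP00]
  have d2P : dQM P 1 = a - b * di * c := by
    rw [dQM_one' P di wi (by rw [hP00]; exact hd1) (by rw [hP00]; exact hd2)
      (by rw [hPW]; exact hw1) (by rw [hPW]; exact hw2), hPW]
  rw [d1M, d2M, d1P, d2P]
  have zadd : (1 : ZMod 2) + 1 = 0 := by decide
  have sg0 : sgnZ 0 = 1 := rfl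
  have sg1 : sgnZ 1 = -1 := rfl
  have hfalse : ((-1 : ℤ) = 1) = False := by norm_num
  have riZ : Ring.inverse (d - c * ai * b) = zi := rinv_eq hz1 hz2
  have riW : Ring.inverse (a - b * di * c) = wi := rinv_eq hw1 hw2
  have riA : Ring.inverse a = ai := rinv_eq ha1 ha2
  have riD : Ring.inverse d = di := rinv_eq hd1 hd2
  rcases hs 0 with hs0 | hs0 <;> rcases hs 1 with hs1 | hs1
  · -- s = (1,1) : goal a * Z = d * W
    rw [hs0, hs1]
    simp only [pexp, eq_self_iff_true, if_true]
    have h1 := hrel 0 0 1 0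
    have h2 := hrel 0 1 1 1
    have h3 := hrel 0 0 1 1
    simp only [scomm, pdeg, hs0, hs1, eq_self_iff_true, if_true, hfalse, if_false,
      ← ha', ← hb', ← hc', ← hd',
      add_zero, zero_add, mul_zero, zero_mul, mul_one, one_mul, zadd,
      sg0, sg1, one_smul, neg_smul, sub_neg_eq_add, neg_neg] at h1 h2 h3
    -- h1 : a*c - c*a = c*a - a*c ; h2 : b*d - d*b = d*b - b*d ; h3 : a*d - d*a = c*b - b*c
    have r_ac : a * c = c * a := by
      have hh : (a*c - c*a) + (a*c - c*a) = 0 := by nth_rewrite 2 [h1]; abel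
      exact sub_eq_zero.mp (half0 hh)
    have r_bd : b * d = d * b := by
      have hh : (b*d - d*b) + (b*d - d*b) = 0 := by nth_rewrite 2 [h2]; abel
      exact sub_eq_zero.mp (half0 hh)
    have hcai : c * ai = ai * c := comm_inv ha1 ha2 r_ac
    have hbdi : b * di = di * b := comm_inv hd1 hd2 r_bd.symm
    have l1 : a * (c * ai * b) = c * b := by
      rw [hcai, show a * (ai * c * b) = a * ai * (c * b) from by noncomm_ring, ha1, one_mul]
    have l2 : d * (b * di * c) = b * c := by
      rw [hbdi, show d * (di * b * c) = d * di * (b * c) from by noncomm_ring, hd1, one_mul]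
    rw [mul_sub, mul_sub, l1, l2]
    have key : a * d = d * a + (c * b - b * c) := by rw [← h3]; abel
    rw [key]; abel
  · -- s = (1,-1) : goal a * zi = di * W
    rw [hs0, hs1]
    simp only [pexp, eq_self_iff_true, if_true, hfalse, if_false]
    rw [riZ, riD]
    have h1 := hrel 0 0 1 0
    have h2 := hrel 1 0 1 1
    have h3 := hrel 1 0 1 0
    have h4 := hrel 0 0 1 1
    simp only [scomm, pdeg, hs0, hs1, eq_self_iff_true, if_true, hfalse, if_false,
      ← ha', ← hb', ← hc', ← hd',
      add_zero, zero_add, mul_zero, zero_mul, mul_one, one_mul, zadd,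
      sg0, sg1, one_smul, neg_smul, sub_neg_eq_add, neg_neg] at h1 h2 h3 h4
    -- h1 : a*c - c*a = c*a - a*c ; h2 : c*d - d*c = -(c*d - d*c)
    -- h3 : c*c + c*c = -(c*c + c*c) ; h4 : a*d - d*a = c*b + b*c
    have r_ac : a * c = c * a := by
      have hh : (a*c - c*a) + (a*c - c*a) = 0 := by nth_rewrite 2 [h1]; abel
      exact sub_eq_zero.mp (half0 hh)
    have r_cd : c * d = d * c := by
      have hh : (c*d - d*c) + (c*d - d*c) = 0 := by nth_rewrite 2 [h2]; abel
      exact sub_eq_zero.mp (half0 hh)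
    have r_cc : c * c = 0 := by
      have hh : (c*c + c*c) + (c*c + c*c) = 0 := by nth_rewrite 2 [h3]; abel
      exact half0 (half0 hh)
    have hcai : c * ai = ai * c := comm_inv ha1 ha2 r_ac
    have l1 : a * (c * ai * b) = c * b := by
      rw [hcai, show a * (ai * c * b) = a * ai * (c * b) from by noncomm_ring, ha1, one_mul]
    have l2 : b * di * (c * d) = b * c := by
      rw [r_cd, show b * di * (d * c) = b * (di * d) * c from by noncomm_ring, hd2, mul_one]
    have l3 : b * di * (c * (c * (ai * b))) = 0 := by
      rw [show c * (c * (ai * b)) = (c * c) * (ai * b) from (mul_assoc _ _ _).symm, r_cc,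
        zero_mul, mul_zero]
    have key : (a - b * di * c) * (d - c * ai * b) = d * a := by
      calc (a - b * di * c) * (d - c * ai * b)
          = a*d - a*(c*ai*b) - b*di*(c*d) + b*di*(c*(c*(ai*b))) := by noncomm_ring
      _ = a*d - (c*b + b*c) := by rw [l1, l2, l3]; abel
      _ = a*d - (a*d - d*a) := by rw [h4]
      _ = d * a := by abel
    calc a * zi = di * (d * a * zi) := by
          rw [show di * (d * a * zi) = (di * d) * (a * zi) from by noncomm_ring, hd2, one_mul]
    _ = di * ((a - b * di * c) * (d - c * ai * b) * zi) := by rw [key]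
    _ = di * (a - b * di * c) := by rw [mul_assoc (a - b * di * c) _ zi, hz1, mul_one]
  · -- s = (-1,1) : goal ai * Z = d * wi
    rw [hs0, hs1]
    simp only [pexp, eq_self_iff_true, if_true, hfalse, if_false]
    rw [riA, riW]
    have h1 := hrel 0 0 0 1
    have h2 := hrel 0 1 1 1
    have h3 := hrel 0 1 0 1
    have h4 := hrel 0 0 1 1
    simp only [scomm, pdeg, hs0, hs1, eq_self_iff_true, if_true, hfalse, if_false,
      ← ha', ← hb', ← hc', ← hd',
      add_zero, zero_add, mul_zero, zero_mul, mul_one, one_mul, zadd,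
      sg0, sg1, one_smul, neg_smul, sub_neg_eq_add, neg_neg] at h1 h2 h3 h4
    -- h1 : a*b - b*a = -(a*b - b*a) ; h2 : b*d - d*b = d*b - b*d
    -- h3 : b*b + b*b = -(b*b + b*b) ; h4 : a*d - d*a = -(c*b + b*c)
    have r_ab : a * b = b * a := by
      have hh : (a*b - b*a) + (a*b - b*a) = 0 := by nth_rewrite 2 [h1]; abel
      exact sub_eq_zero.mp (half0 hh)
    have r_bd : b * d = d * b := by
      have hh : (b*d - d*b) + (b*d - d*b) = 0 := by nth_rewrite 2 [h2]; abel
      exact sub_eq_zero.mp (half0 hh)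
    have r_bb : b * b = 0 := by
      have hh : (b*b + b*b) + (b*b + b*b) = 0 := by nth_rewrite 2 [h3]; abel
      exact half0 (half0 hh)
    have hbdi : b * di = di * b := comm_inv hd1 hd2 r_bd.symm
    have m1 : d * (b * di * c) = b * c := by
      rw [hbdi, show d * (di * b * c) = (d * di) * (b * c) from by noncomm_ring, hd1, one_mul]
    have m2 : c * ai * (b * a) = c * b := by
      rw [← r_ab, show c * ai * (a * b) = c * (ai * a) * b from by noncomm_ring, ha2, mul_one]
    have m3 : c * ai * (b * (b * (di * c))) = 0 := by
      rw [show b * (b * (di * c)) = (b * b) * (di * c) from (mul_assoc _ _ _).symm, r_bb,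
        zero_mul, mul_zero]
    have key : (d - c * ai * b) * (a - b * di * c) = a * d := by
      calc (d - c * ai * b) * (a - b * di * c)
          = d*a - d*(b*di*c) - c*ai*(b*a) + c*ai*(b*(b*(di*c))) := by noncomm_ring
      _ = d*a + -(c*b + b*c) := by rw [m1, m2, m3]; abel
      _ = d*a + (a*d - d*a) := by rw [← h4]
      _ = a * d := by abel
    calc ai * (d - c * ai * b)
        = ai * ((d - c * ai * b) * ((a - b * di * c) * wi)) := by rw [hw1, mul_one]
    _ = ai * (a * (d * wi)) := by
          rw [show (d - c * ai * b) * ((a - b * di * c) * wi)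
              = ((d - c * ai * b) * (a - b * di * c)) * wi from by noncomm_ring, key,
            mul_assoc]
    _ = d * wi := by rw [← mul_assoc, ha2, one_mul]
  · -- s = (-1,-1) : goal ai * zi = di * wi
    rw [hs0, hs1]
    simp only [pexp, hfalse, if_false]
    rw [riA, riZ, riD, riW]
    have h1 := hrel 0 0 0 1
    have h2 := hrel 1 0 1 1
    have h3 := hrel 0 0 1 1
    simp only [scomm, pdeg, hs0, hs1, eq_self_iff_true, if_true, hfalse, if_false,
      ← ha', ← hb', ← hc', ← hd',
      add_zero, zero_add, mul_zero, zero_mul, mul_one, one_mul, zadd,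
      sg0, sg1, one_smul, neg_smul, sub_neg_eq_add, neg_neg] at h1 h2 h3
    -- h1 : a*b - b*a = -(a*b - b*a) ; h2 : c*d - d*c = -(c*d - d*c)
    -- h3 : a*d - d*a = -(c*b - b*c)
    have r_ab : a * b = b * a := by
      have hh : (a*b - b*a) + (a*b - b*a) = 0 := by nth_rewrite 2 [h1]; abel
      exact sub_eq_zero.mp (half0 hh)
    have r_cd : c * d = d * c := by
      have hh : (c*d - d*c) + (c*d - d*c) = 0 := by nth_rewrite 2 [h2]; abel
      exact sub_eq_zero.mp (half0 hh)
    have l1 : (c * ai * b) * a = c * b := by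
      rw [show (c * ai * b) * a = c * ai * (b * a) from by noncomm_ring, ← r_ab,
        show c * ai * (a * b) = c * (ai * a) * b from by noncomm_ring, ha2, mul_one]
    have l2 : (b * di * c) * d = b * c := by
      rw [show (b * di * c) * d = b * di * (c * d) from by noncomm_ring, r_cd,
        show b * di * (d * c) = b * (di * d) * c from by noncomm_ring, hd2, mul_one]
    have key : (d - c * ai * b) * a = (a - b * di * c) * d := by
      calc (d - c * ai * b) * a = d*a - (c*ai*b)*a := by noncomm_ring
      _ = d*a - c*b := by rw [l1]
      _ = a*d - (a*d - d*a) - c*b := by abel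
      _ = a*d - -(c*b - b*c) - c*b := by rw [h3]
      _ = a*d - b*c := by abel
      _ = a*d - (b*di*c)*d := by rw [l2]
      _ = (a - b * di * c) * d := by noncomm_ring
    have hu : (ai * zi) * ((d - c * ai * b) * a) = 1 := by
      rw [show (ai * zi) * ((d - c * ai * b) * a)
          = ai * ((zi * (d - c * ai * b)) * a) from by noncomm_ring, hz2, one_mul, ha2]
    have hv : ((a - b * di * c) * d) * (di * wi) = 1 := by
      rw [show ((a - b * di * c) * d) * (di * wi)
          = (a - b * di * c) * ((d * di) * wi) from by noncomm_ring, hd1, one_mul, hw1]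
    calc ai * zi
        = (ai * zi) * (((a - b * di * c) * d) * (di * wi)) := by rw [hv, mul_one]
    _ = ((ai * zi) * ((d - c * ai * b) * a)) * (di * wi) := by
          rw [← key, show (ai * zi) * (((d - c * ai * b) * a) * (di * wi))
            = ((ai * zi) * ((d - c * ai * b) * a)) * (di * wi) from by noncomm_ring]
    _ = di * wi := by rw [hu, one_mul]
end
end
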